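/- Sylvester's Determinantal Identity: let R be a commutative ring, let M be an n-by-n matrix over R, and let S ⊆ {1,…,n} with |S| < n. Define a matrix syl(M,S), with rows and columns indexed by {1,…,n} ∖ S, by syl(M,S)_{i,j} := det M[S ∪ {i}, S ∪ {j}] for i, j ∉ S. Then (det M) · (det M[S,S])^{n−|S|−1} = det syl(M,S). -/

import Mathlib

/-- The determinant of the submatrix `M[A,B]` of `M` consisting of the entries with
row index in `A` and column index in `B`, rows and columns taken in increasing order
of their indices.  (Defined to be `0` if `A` and `B` have different cardinalities.) -/
noncomputable def minorDet {R : Type*} [CommRing R] {n : ℕ}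
    (M : Matrix (Fin n) (Fin n) R) (A B : Finset (Fin n)) : R :=
  if h : B.card = A.card then
    Matrix.det (Matrix.of fun i j : Fin A.card =>
      M ((A.orderIsoOfFin rfl i : {x // x ∈ A}) : Fin n)
        ((B.orderIsoOfFin h j : {x // x ∈ B}) : Fin n))
  else 0


open Matrix

noncomputable def sylEntry {R : Type*} [CommRing R] {k m : ℕ}
    (A : Matrix (Fin k) (Fin k) R) (B : Matrix (Fin k) (Fin m) R)
    (C : Matrix (Fin m) (Fin k) R) (D : Matrix (Fin m) (Fin m) R) (i j : Fin m) : R :=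
  (Matrix.fromBlocks A (Matrix.of fun a (_ : Fin 1) => B a j)
      (Matrix.of fun (_ : Fin 1) b => C i b) (Matrix.of fun _ _ => D i j)).det

lemma blockSyl_inv {R : Type*} [CommRing R] {k m : ℕ} (hm : 0 < m)
    (A : Matrix (Fin k) (Fin k) R) (B : Matrix (Fin k) (Fin m) R)
    (C : Matrix (Fin m) (Fin k) R) (D : Matrix (Fin m) (Fin m) R) [Invertible A] :
    (Matrix.fromBlocks A B C D).det * A.det ^ (m - 1) =
      (Matrix.of fun i j : Fin m => sylEntry A B C D i j).det := by
  have hN : (Matrix.of fun i j : Fin m => sylEntry A B C D i j)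
      = A.det • (D - C * ⅟A * B) := by
    ext i j
    simp only [Matrix.of_apply, sylEntry, Matrix.smul_apply, smul_eq_mul]
    rw [Matrix.det_fromBlocks₁₁]
    congr 1
    rw [Matrix.det_fin_one]
    simp [Matrix.sub_apply, Matrix.mul_apply, Finset.mul_sum, Finset.sum_mul]
  rw [hN, Matrix.det_smul, Matrix.det_fromBlocks₁₁, mul_comm A.det]
  simp only [Fintype.card_fin]
  have : A.det * A.det ^ (m - 1) = A.det ^ m := by
    rw [← pow_succ']
    congr 1
    omega
  rw [mul_assoc, this, mul_comm]


lemma sylEntry_map {R S : Type*} [CommRing R] [CommRing S] (f : R →+* S) {k m : ℕ}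
    (A : Matrix (Fin k) (Fin k) R) (B : Matrix (Fin k) (Fin m) R)
    (C : Matrix (Fin m) (Fin k) R) (D : Matrix (Fin m) (Fin m) R) (i j : Fin m) :
    f (sylEntry A B C D i j) = sylEntry (A.map f) (B.map f) (C.map f) (D.map f) i j := by
  simp only [sylEntry]
  rw [RingHom.map_det]
  congr 1
  ext a b
  cases a <;> cases b <;> simp [Matrix.fromBlocks, Matrix.map_apply]

lemma blockSyl_lhs_map {R S : Type*} [CommRing R] [CommRing S] (f : R →+* S) {k m : ℕ}
    (A : Matrix (Fin k) (Fin k) R) (B : Matrix (Fin k) (Fin m) R)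
    (C : Matrix (Fin m) (Fin k) R) (D : Matrix (Fin m) (Fin m) R) :
    f ((Matrix.fromBlocks A B C D).det * A.det ^ (m - 1)) =
      (Matrix.fromBlocks (A.map f) (B.map f) (C.map f) (D.map f)).det
        * (A.map f).det ^ (m - 1) := by
  rw [_root_.map_mul, map_pow, RingHom.map_det, RingHom.map_det,
    RingHom.mapMatrix_apply, RingHom.mapMatrix_apply, Matrix.fromBlocks_map]

lemma blockSyl_rhs_map {R S : Type*} [CommRing R] [CommRing S] (f : R →+* S) {k m : ℕ}
    (A : Matrix (Fin k) (Fin k) R) (B : Matrix (Fin k) (Fin m) R)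
    (C : Matrix (Fin m) (Fin k) R) (D : Matrix (Fin m) (Fin m) R) :
    f ((Matrix.of fun i j : Fin m => sylEntry A B C D i j).det) =
      (Matrix.of fun i j : Fin m =>
        sylEntry (A.map f) (B.map f) (C.map f) (D.map f) i j).det := by
  rw [RingHom.map_det]
  congr 1
  ext i j
  simp [sylEntry_map f A B C D i j]

lemma blockSyl {R : Type*} [CommRing R] {k m : ℕ} (hm : 0 < m)
    (A : Matrix (Fin k) (Fin k) R) (B : Matrix (Fin k) (Fin m) R)
    (C : Matrix (Fin m) (Fin k) R) (D : Matrix (Fin m) (Fin m) R) :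
    (Matrix.fromBlocks A B C D).det * A.det ^ (m - 1) =
      (Matrix.of fun i j : Fin m => sylEntry A B C D i j).det := by
  classical
  set ι := (Fin k ⊕ Fin m) × (Fin k ⊕ Fin m)
  let P := MvPolynomial ι ℤ
  let K := FractionRing P
  let f : P →+* K := algebraMap P K
  let Ap : Matrix (Fin k) (Fin k) P := Matrix.of fun a b => MvPolynomial.X (Sum.inl a, Sum.inl b)
  let Bp : Matrix (Fin k) (Fin m) P := Matrix.of fun a j => MvPolynomial.X (Sum.inl a, Sum.inr j)
  let Cp : Matrix (Fin m) (Fin k) P := Matrix.of fun i b => MvPolynomial.X (Sum.inr i, Sum.inl b)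
  let Dp : Matrix (Fin m) (Fin m) P := Matrix.of fun i j => MvPolynomial.X (Sum.inr i, Sum.inr j)
  -- det of generic A is nonzero
  have hdet : Ap.det ≠ 0 := by
    intro h
    have := congrArg (MvPolynomial.eval
      (fun p : ι => if p.1 = p.2 then (1 : ℤ) else 0)) h
    rw [RingHom.map_det, map_zero] at this
    have h1 : ((MvPolynomial.eval
        (fun p : ι => if p.1 = p.2 then (1 : ℤ) else 0)).mapMatrix Ap)
        = (1 : Matrix (Fin k) (Fin k) ℤ) := by
      ext a b
      by_cases hab : a = b <;>
        simp [Ap, hab, Matrix.one_apply, RingHom.mapMatrix_apply, Matrix.map_apply]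
    rw [h1, Matrix.det_one] at this
    exact one_ne_zero this
  have hdetK : ((Ap.map f).det) ≠ 0 := by
    rw [← RingHom.mapMatrix_apply, ← RingHom.map_det]
    intro h
    exact hdet (IsFractionRing.injective P K (by rw [h, map_zero]))
  have : Invertible (Ap.map f) := Matrix.invertibleOfIsUnitDet _ (isUnit_iff_ne_zero.mpr hdetK)
  have hK := blockSyl_inv hm (Ap.map f) (Bp.map f) (Cp.map f) (Dp.map f)
  have hP : (Matrix.fromBlocks Ap Bp Cp Dp).det * Ap.det ^ (m - 1) =
      (Matrix.of fun i j : Fin m => sylEntry Ap Bp Cp Dp i j).det := by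
    apply IsFractionRing.injective P K
    rw [blockSyl_lhs_map f, blockSyl_rhs_map f]
    exact hK
  -- specialize
  let v : ι → R := fun p => Sum.elim
    (fun a => Sum.elim (fun b => A a b) (fun j => B a j) p.2)
    (fun i => Sum.elim (fun b => C i b) (fun j => D i j) p.2) p.1
  let φ : P →+* R := MvPolynomial.eval₂Hom (Int.castRingHom R) v
  have := congrArg φ hP
  rw [blockSyl_lhs_map φ, blockSyl_rhs_map φ] at this
  have hA : Ap.map φ = A := by ext a b; exact MvPolynomial.eval₂Hom_X' (Int.castRingHom R) v _
  have hB : Bp.map φ = B := by ext a b; exact MvPolynomial.eval₂Hom_X' (Int.castRingHom R) v _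
  have hC : Cp.map φ = C := by ext a b; exact MvPolynomial.eval₂Hom_X' (Int.castRingHom R) v _
  have hD : Dp.map φ = D := by ext a b; exact MvPolynomial.eval₂Hom_X' (Int.castRingHom R) v _
  rwa [hA, hB, hC, hD] at this

lemma orderIsoOfFin_cast {α : Type*} [LinearOrder α] (s : Finset α) {a b : ℕ}
    (ha : s.card = a) (hb : s.card = b) (h : b = a) (i : Fin b) :
    s.orderIsoOfFin ha (Fin.cast h i) = s.orderIsoOfFin hb i := by
  subst h; rfl

noncomputable def wEquiv {n : ℕ} (S : Finset (Fin n)) (x : Fin n) (hx : x ∉ S) :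
    (Fin S.card ⊕ Fin 1) ≃ {y // y ∈ insert x S} :=
  Equiv.ofBijective
    (Sum.elim
      (fun a => ⟨(S.orderIsoOfFin rfl a : Fin n),
        Finset.mem_insert_of_mem (S.orderIsoOfFin rfl a).2⟩)
      (fun _ => ⟨x, Finset.mem_insert_self x S⟩))
    (by
      constructor
      · rintro (a | u) (b | v) h <;>
          simp only [Sum.elim_inl, Sum.elim_inr, Subtype.mk.injEq] at h
        · exact congrArg Sum.inl ((S.orderIsoOfFin rfl).injective (Subtype.ext h))
        · exact absurd (by rw [← h]; exact (S.orderIsoOfFin rfl a).2 : x ∈ S) hx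
        · exact absurd (by rw [h]; exact (S.orderIsoOfFin rfl b).2 : x ∈ S) hx
        · exact congrArg Sum.inr (Subsingleton.elim u v)
      · rintro ⟨y, hy⟩
        rcases Finset.mem_insert.mp hy with rfl | hyS
        · exact ⟨Sum.inr 0, rfl⟩
        · refine ⟨Sum.inl ((S.orderIsoOfFin rfl).symm ⟨y, hyS⟩), ?_⟩
          apply Subtype.ext
          show ((S.orderIsoOfFin rfl) ((S.orderIsoOfFin rfl).symm ⟨y, hyS⟩) : Fin n) = y
          exact congrArg Subtype.val
            ((S.orderIsoOfFin rfl).apply_symm_apply ⟨y, hyS⟩))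

noncomputable def piEquiv {n : ℕ} (S : Finset (Fin n)) (x : Fin n) (hx : x ∉ S) :
    (Fin S.card ⊕ Fin 1) ≃ Fin (S.card + 1) :=
  (wEquiv S x hx).trans
    ((insert x S).orderIsoOfFin (Finset.card_insert_of_notMem hx)).toEquiv.symm

lemma piEquiv_spec {n : ℕ} (S : Finset (Fin n)) (x : Fin n) (hx : x ∉ S)
    (z : Fin S.card ⊕ Fin 1) :
    ((insert x S).orderIsoOfFin (Finset.card_insert_of_notMem hx)
        (piEquiv S x hx z) : Fin n) =
      Sum.elim (fun a => (S.orderIsoOfFin rfl a : Fin n)) (fun _ => x) z := by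
  simp only [_root_.piEquiv, Equiv.trans_apply, OrderIso.toEquiv_symm, RelIso.coe_fn_toEquiv]
  erw [OrderIso.apply_symm_apply]
  cases z <;> rfl

noncomputable def epsSign {n : ℕ} (S : Finset (Fin n)) (x : Fin n) (hx : x ∉ S) : ℤˣ :=
  Equiv.Perm.sign ((piEquiv S x hx).trans (finSumFinEquiv (m := S.card) (n := 1)).symm)

lemma sign_pi_trans {n : ℕ} (S : Finset (Fin n)) (x y : Fin n) (hx : x ∉ S) (hy : y ∉ S) :
    Equiv.Perm.sign ((piEquiv S x hx).trans (piEquiv S y hy).symm) =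
      epsSign S x hx * epsSign S y hy := by
  have h : (piEquiv S x hx).trans (piEquiv S y hy).symm =
      ((piEquiv S y hy).trans (finSumFinEquiv (m := S.card) (n := 1)).symm).symm *
        ((piEquiv S x hx).trans (finSumFinEquiv (m := S.card) (n := 1)).symm) := by
    ext z
    simp [Equiv.Perm.mul_def]
  rw [h, _root_.map_mul, Equiv.Perm.sign_symm, epsSign, epsSign, mul_comm]

lemma minorDet_eq {R : Type*} [CommRing R] {n : ℕ} (M : Matrix (Fin n) (Fin n) R)
    {s t : Finset (Fin n)} {c : ℕ} (hs : s.card = c) (ht : t.card = c) :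
    minorDet M s t =
      (Matrix.of fun i j : Fin c =>
        M (s.orderIsoOfFin hs i : Fin n) (t.orderIsoOfFin ht j : Fin n)).det := by
  have hts : t.card = s.card := ht.trans hs.symm
  have hmat : (Matrix.of fun i j : Fin s.card =>
        M (s.orderIsoOfFin rfl i : Fin n) (t.orderIsoOfFin hts j : Fin n))
      = (Matrix.of fun i j : Fin c =>
          M (s.orderIsoOfFin hs i : Fin n) (t.orderIsoOfFin ht j : Fin n)).submatrix
        (finCongr hs) (finCongr hs) := by
    ext i j
    simp only [Matrix.submatrix_apply, Matrix.of_apply, finCongr_apply]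
    rw [orderIsoOfFin_cast s hs rfl hs i, orderIsoOfFin_cast t ht hts hs j]
  rw [minorDet, dif_pos hts, hmat, Matrix.det_submatrix_equiv_self]

lemma minor_insert_eq {R : Type*} [CommRing R] {n : ℕ} (M : Matrix (Fin n) (Fin n) R)
    (S : Finset (Fin n)) (x y : Fin n) (hx : x ∉ S) (hy : y ∉ S) :
    minorDet M (insert x S) (insert y S) =
      ((epsSign S x hx : ℤ) : R) * (((epsSign S y hy : ℤ) : R) *
        (Matrix.fromBlocks
          (Matrix.of fun a b : Fin S.card =>
            M (S.orderIsoOfFin rfl a : Fin n) (S.orderIsoOfFin rfl b : Fin n))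
          (Matrix.of fun (a : Fin S.card) (_ : Fin 1) => M (S.orderIsoOfFin rfl a : Fin n) y)
          (Matrix.of fun (_ : Fin 1) (b : Fin S.card) => M x (S.orderIsoOfFin rfl b : Fin n))
          (Matrix.of fun (_ : Fin 1) (_ : Fin 1) => M x y)).det) := by
  have hcx : (insert x S).card = S.card + 1 := Finset.card_insert_of_notMem hx
  have hcy : (insert y S).card = S.card + 1 := Finset.card_insert_of_notMem hy
  rw [minorDet_eq M hcx hcy]
  set Q : Matrix (Fin (S.card + 1)) (Fin (S.card + 1)) R :=
    Matrix.of fun a b => M ((insert x S).orderIsoOfFin hcx a : Fin n)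
      ((insert y S).orderIsoOfFin hcy b : Fin n) with hQ
  have e1 := piEquiv_spec S x hx
  have e2 := piEquiv_spec S y hy
  have hF : (Matrix.fromBlocks
        (Matrix.of fun a b : Fin S.card =>
          M (S.orderIsoOfFin rfl a : Fin n) (S.orderIsoOfFin rfl b : Fin n))
        (Matrix.of fun (a : Fin S.card) (_ : Fin 1) => M (S.orderIsoOfFin rfl a : Fin n) y)
        (Matrix.of fun (_ : Fin 1) (b : Fin S.card) => M x (S.orderIsoOfFin rfl b : Fin n))
        (Matrix.of fun (_ : Fin 1) (_ : Fin 1) => M x y))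
      = Q.submatrix (piEquiv S x hx) (piEquiv S y hy) := by
    simp only [Finset.coe_orderIsoOfFin_apply] at e1 e2
    ext z w
    cases z <;> cases w <;>
      · simp only [hQ, Matrix.submatrix_apply, Matrix.of_apply,
          Finset.coe_orderIsoOfFin_apply, e1, e2]
        rfl
  have hσ : Q.submatrix (piEquiv S x hx) (piEquiv S y hy) =
      (Q.submatrix (piEquiv S y hy) (piEquiv S y hy)).submatrix
        ((piEquiv S x hx).trans (piEquiv S y hy).symm) id := by
    ext z w
    simp [Matrix.submatrix_apply]
  have hdetF : (Q.submatrix (piEquiv S x hx) (piEquiv S y hy)).det =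
      (((epsSign S x hx * epsSign S y hy : ℤˣ) : ℤ) : R) * Q.det := by
    rw [hσ, Matrix.det_permute, sign_pi_trans, Matrix.det_submatrix_equiv_self]
  rw [hF, hdetF]
  have huu : (((epsSign S x hx * epsSign S y hy : ℤˣ) : ℤ) : R) *
      (((epsSign S x hx * epsSign S y hy : ℤˣ) : ℤ) : R) = 1 := by
    rw [← Int.cast_mul, ← Units.val_mul, Int.units_mul_self, Units.val_one, Int.cast_one]
  have hc : (((epsSign S x hx * epsSign S y hy : ℤˣ) : ℤ) : R) =
      ((epsSign S x hx : ℤ) : R) * ((epsSign S y hy : ℤ) : R) := by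
    push_cast [Units.val_mul]
    ring
  calc Q.det = 1 * Q.det := (one_mul _).symm
    _ = _ := by
        rw [← huu, hc]
        ring

theorem sylvester_determinantal_identity {R : Type*} [CommRing R] {n : ℕ}
    (M : Matrix (Fin n) (Fin n) R) (S : Finset (Fin n)) (hS : S.card < n) :
    M.det * (minorDet M S S) ^ (n - S.card - 1) =
      Matrix.det (Matrix.of fun i j : {x : Fin n // x ∉ S} =>
        minorDet M (insert i.1 S) (insert j.1 S)) := by
  classical
  have hm : 0 < n - S.card := by omega
  have hT : Sᶜ.card = n - S.card := by rw [Finset.card_compl, Fintype.card_fin]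
  let eS := S.orderIsoOfFin rfl
  let eT := Sᶜ.orderIsoOfFin hT
  let A : Matrix (Fin S.card) (Fin S.card) R := Matrix.of fun a b => M (eS a) (eS b)
  let B : Matrix (Fin S.card) (Fin (n - S.card)) R := Matrix.of fun a j => M (eS a) (eT j)
  let C : Matrix (Fin (n - S.card)) (Fin S.card) R := Matrix.of fun i b => M (eT i) (eS b)
  let D : Matrix (Fin (n - S.card)) (Fin (n - S.card)) R := Matrix.of fun i j => M (eT i) (eT j)
  have hxT : ∀ i : Fin (n - S.card), (eT i : Fin n) ∉ S :=
    fun i => Finset.mem_compl.mp (eT i).2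
  let eTe : Fin (n - S.card) ≃ {x : Fin n // x ∉ S} :=
    eT.toEquiv.trans (Equiv.subtypeEquivRight (fun x => Finset.mem_compl))
  let g : (Fin S.card ⊕ Fin (n - S.card)) ≃ Fin n :=
    (Equiv.sumCongr eS.toEquiv eTe).trans (Equiv.sumCompl (· ∈ S))
  have hdetM : (Matrix.fromBlocks A B C D).det = M.det := by
    have hb : Matrix.fromBlocks A B C D = M.submatrix g g := by
      ext z w
      cases z <;> cases w <;> rfl
    rw [hb, Matrix.det_submatrix_equiv_self]
  have hminor : minorDet M S S = A.det := by
    rw [minorDet_eq M (rfl : S.card = S.card) rfl]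
  let cε : Fin (n - S.card) → R := fun i => ((epsSign S (eT i) (hxT i) : ℤ) : R)
  have key : (Matrix.of fun i j : Fin (n - S.card) =>
        minorDet M (insert (eT i : Fin n) S) (insert (eT j : Fin n) S))
      = Matrix.of fun i j => cε i * (cε j * sylEntry A B C D i j) := by
    ext i j
    exact minor_insert_eq M S _ _ (hxT i) (hxT j)
  have hsub : (Matrix.of fun i j : {x : Fin n // x ∉ S} =>
        minorDet M (insert i.1 S) (insert j.1 S)).submatrix eTe eTe
      = Matrix.of fun i j : Fin (n - S.card) =>
        minorDet M (insert (eT i : Fin n) S) (insert (eT j : Fin n) S) := rfl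
  have e1 : (Matrix.of fun i j : Fin (n - S.card) =>
        cε i * (cε j * sylEntry A B C D i j)).det
      = (∏ i, cε i) * (Matrix.of fun i j : Fin (n - S.card) =>
          cε j * sylEntry A B C D i j).det :=
    Matrix.det_mul_column cε _
  have e2 : (Matrix.of fun i j : Fin (n - S.card) =>
        cε j * sylEntry A B C D i j).det
      = (∏ i, cε i) * (Matrix.of fun i j : Fin (n - S.card) =>
          sylEntry A B C D i j).det :=
    Matrix.det_mul_row cε _
  have hprod : (∏ i, cε i) * (∏ i, cε i) = 1 := by
    rw [← Finset.prod_mul_distrib]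
    apply Finset.prod_eq_one
    intro i _
    show ((epsSign S (eT i) (hxT i) : ℤ) : R) * ((epsSign S (eT i) (hxT i) : ℤ) : R) = 1
    rw [← Int.cast_mul, ← Units.val_mul, Int.units_mul_self, Units.val_one, Int.cast_one]
  rw [← Matrix.det_submatrix_equiv_self eTe, hsub, key, e1, e2,
    ← blockSyl hm A B C D, hdetM, hminor, ← mul_assoc, hprod, one_mul]
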